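/- arXiv:2312.15467 — 3 statements merged into one kernel-verified Lean document; each statement's English description precedes it below -/
import Mathlib

section
/- Let {C_1, ..., C_s} be a pairwise disjoint set of 2-cycle matrices and P a permutation matrix. Then for any binary vector α ∈ {0,1}^s, the product (∏_{i=1}^s C_i^{α_i})·P equals P + Σ_{i=1}^s α_i·(C_i − I_n)·P. -/
def permMat {n : ℕ} (π : Equiv.Perm (Fin n)) : Matrix (Fin n) (Fin n) ℝ :=
  fun i j => if π i = j then 1 else 0

def IsPermMatrix {n : ℕ} (P : Matrix (Fin n) (Fin n) ℝ) : Prop :=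
  ∃ π : Equiv.Perm (Fin n), P = permMat π

def IsTwoCycleMatrix {n : ℕ} (C : Matrix (Fin n) (Fin n) ℝ) : Prop :=
  ∃ i j : Fin n, i ≠ j ∧ C = permMat (Equiv.swap i j)

def DisjointTwoCycles {n : ℕ} (C C' : Matrix (Fin n) (Fin n) ℝ) : Prop :=
  ∀ i : Fin n, (C i i = 0 → C' i i = 1) ∧ (C' i i = 0 → C i i = 1)

lemma mul_zero_of_disjoint {n : ℕ} {A B : Matrix (Fin n) (Fin n) ℝ}
    (hA : IsTwoCycleMatrix A) (hB : IsTwoCycleMatrix B)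
    (h : DisjointTwoCycles A B) : (A - 1) * (B - 1) = 0 := by
  obtain ⟨a, b, hab, rfl⟩ := hA
  obtain ⟨c, d, hcd, rfl⟩ := hB
  -- disjoint supports: swap c d k ≠ k → swap a b k = k
  have key : ∀ k : Fin n, Equiv.swap c d k ≠ k → Equiv.swap a b k = k := by
    intro k hk
    have := (h k).2
    simp only [permMat] at this
    by_contra hab'
    have h1 : (if Equiv.swap c d k = k then (1:ℝ) else 0) = 0 := if_neg hk
    have := this h1
    rw [if_neg hab'] at this
    norm_num at this
  ext x y
  simp only [Matrix.mul_apply, Matrix.sub_apply, Matrix.one_apply, permMat,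
    Matrix.zero_apply]
  apply Finset.sum_eq_zero
  intro k _
  by_cases h2 : Equiv.swap c d k = k
  · have : (if Equiv.swap c d k = y then (1:ℝ) else 0) - (if k = y then 1 else 0) = 0 := by
      rw [h2]; ring
    rw [this, mul_zero]
  · have hk := key k h2
    have : (if Equiv.swap a b x = k then (1:ℝ) else 0) - (if x = k then 1 else 0) = 0 := by
      by_cases hx : x = k
      · subst hx; simp [hk]
      · rw [if_neg hx, if_neg]
        · ring
        · intro hc
          apply hx
          have hx2 : x = Equiv.swap a b k := by
            rw [← hc, Equiv.swap_apply_self]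
          rw [hx2, hk]
    rw [this, zero_mul]

lemma prod_expansion {n s : ℕ} (C : Fin s → Matrix (Fin n) (Fin n) ℝ)
    (α : Fin s → ℝ) (hα : ∀ i, α i = 0 ∨ α i = 1)
    (hz : ∀ i j, i ≠ j → (C i - 1) * (C j - 1) = 0) :
    (List.ofFn fun i => if α i = 1 then C i else 1).prod
      = 1 + ∑ i, α i • (C i - 1) := by
  induction s with
  | zero => simp
  | succ m ih =>
    rw [List.ofFn_succ, List.prod_cons]
    have hrest : (List.ofFn fun i : Fin m => if α i.succ = 1 then C i.succ else 1).prod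
        = 1 + ∑ i : Fin m, α i.succ • (C i.succ - 1) := by
      exact ih (fun i => C i.succ) (fun i => α i.succ) (fun i => hα i.succ)
        (fun i j hij => hz i.succ j.succ (fun h => hij (Fin.succ_injective m h)))
    rw [hrest]
    have hfirst : (if α 0 = 1 then C 0 else 1) = 1 + α 0 • (C 0 - 1) := by
      rcases hα 0 with h | h <;> rw [h] <;> simp
    rw [hfirst, Fin.sum_univ_succ]
    have hzero : (C 0 - 1) * ∑ i : Fin m, α i.succ • (C i.succ - 1) = 0 := by
      rw [Finset.mul_sum]
      apply Finset.sum_eq_zero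
      intro i _
      rw [Matrix.mul_smul, hz 0 i.succ (Fin.succ_ne_zero i).symm, smul_zero]
    generalize hS : (∑ i : Fin m, α i.succ • (C i.succ - 1)) = S at hzero ⊢
    rw [add_mul, mul_add, mul_add, one_mul, mul_one, Matrix.smul_mul, hzero, smul_zero,
      add_zero]
    simp only [one_mul]
    abel

/-- For pairwise disjoint 2-cycle matrices `C 1, …, C s`, a permutation matrix `P`
and a binary vector `α`, `(∏ i, (C i)^(α i)) * P = P + ∑ i, α i • ((C i - I) * P)`. -/
theorem cyclic_expansion_update {n s : ℕ} (C : Fin s → Matrix (Fin n) (Fin n) ℝ)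
    (hC : ∀ i, IsTwoCycleMatrix (C i))
    (hdisj : ∀ i j, i ≠ j → DisjointTwoCycles (C i) (C j))
    (P : Matrix (Fin n) (Fin n) ℝ) (hP : IsPermMatrix P)
    (α : Fin s → ℝ) (hα : ∀ i, α i = 0 ∨ α i = 1) :
    (List.ofFn fun i => if α i = 1 then C i else 1).prod * P
      = P + ∑ i, α i • ((C i - 1) * P) := by
  rw [prod_expansion C α hα
    (fun i j hij => mul_zero_of_disjoint (hC i) (hC j) (hdisj i j hij))]
  rw [add_mul, one_mul, Finset.sum_mul]
  congr 1
  refine Finset.sum_congr rfl fun i _ => ?_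
  rw [Matrix.smul_mul]
end

section
/- Every permutation on n elements can be written as a product of two permutations, each of which is a product of pairwise disjoint transpositions (i.e., each is an involution). -/
open Equiv Equiv.Perm

section Aux
variable {α : Type*} [DecidableEq α] [Fintype α]

/-- If a zpower of a cycle fixes a point of its support, it is the identity pointwise. -/
lemma cycle_zpow_fix {c : Equiv.Perm α} (hc : c.IsCycle) {a : α} (ha : a ∈ c.support)
    {i : ℤ} (h : (c ^ i) a = a) : ∀ x, (c ^ i) x = x := by
  intro x
  by_cases hx : x ∈ c.support
  · obtain ⟨j, hj⟩ := hc.exists_zpow_eq (Equiv.Perm.mem_support.mp ha)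
      (Equiv.Perm.mem_support.mp hx)
    have key : (c ^ i) ((c ^ j) a) = (c ^ j) ((c ^ i) a) := by
      rw [← Equiv.Perm.mul_apply, ← Equiv.Perm.mul_apply, ← zpow_add, ← zpow_add, add_comm]
    rw [← hj, key, h, hj]
  · exact Equiv.Perm.zpow_apply_eq_self_of_apply_eq_self
      (Equiv.Perm.notMem_support.mp hx) i

/-- A cycle is a product of two involutions supported within its support. -/
lemma cycle_decomp {c : Equiv.Perm α} (hc : c.IsCycle) :
    ∃ σ τ : Equiv.Perm α, σ * σ = 1 ∧ τ * τ = 1 ∧ c = σ * τ ∧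
      σ.support ⊆ c.support ∧ τ.support ⊆ c.support := by
  classical
  obtain ⟨a, ha', -⟩ := id hc
  have ha : a ∈ c.support := Equiv.Perm.mem_support.mpr ha'
  -- the "reversal" map
  set f : α → α := fun x =>
    if hx : x ∈ c.support then
      (c ^ (-(Classical.choose (hc.exists_zpow_eq (Equiv.Perm.mem_support.mp ha)
        (Equiv.Perm.mem_support.mp hx))))) a
    else x with hf
  have hrev : ∀ i : ℤ, f ((c ^ i) a) = (c ^ (-i)) a := by
    intro i
    have hmem : (c ^ i) a ∈ c.support := Equiv.Perm.zpow_apply_mem_support.mpr ha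
    have : f ((c ^ i) a) =
        (c ^ (-(Classical.choose (hc.exists_zpow_eq (Equiv.Perm.mem_support.mp ha)
          (Equiv.Perm.mem_support.mp hmem))))) a := by
      simp only [hf, dif_pos hmem]
    rw [this]
    set j := Classical.choose (hc.exists_zpow_eq (Equiv.Perm.mem_support.mp ha)
      (Equiv.Perm.mem_support.mp hmem)) with hj
    have hjspec : (c ^ j) a = (c ^ i) a :=
      Classical.choose_spec (hc.exists_zpow_eq (Equiv.Perm.mem_support.mp ha)
        (Equiv.Perm.mem_support.mp hmem))
    have hfix : (c ^ (j - i)) a = a := by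
      have : (c ^ (j - i)) a = (c ^ (-i)) ((c ^ j) a) := by
        rw [← Equiv.Perm.mul_apply, ← zpow_add]; ring_nf
      rw [this, hjspec, ← Equiv.Perm.mul_apply, ← zpow_add]
      simp
    have hall := cycle_zpow_fix hc ha hfix
    have := hall ((c ^ (-j)) a)
    rw [← Equiv.Perm.mul_apply, ← zpow_add] at this
    have h2 : (j - i) + (-j) = -i := by ring
    rw [h2] at this
    exact this.symm
  have hfix' : ∀ x ∉ c.support, f x = x := fun x hx => by simp only [hf, dif_neg hx]
  have hmemf : ∀ x ∈ c.support, f x ∈ c.support := by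
    intro x hx
    obtain ⟨i, hi⟩ := hc.exists_zpow_eq (Equiv.Perm.mem_support.mp ha)
      (Equiv.Perm.mem_support.mp hx)
    rw [← hi, hrev i]
    exact Equiv.Perm.zpow_apply_mem_support.mpr ha
  have hinv : Function.Involutive f := by
    intro x
    by_cases hx : x ∈ c.support
    · obtain ⟨i, hi⟩ := hc.exists_zpow_eq (Equiv.Perm.mem_support.mp ha)
        (Equiv.Perm.mem_support.mp hx)
      rw [← hi, hrev i, hrev (-i), neg_neg]
    · rw [hfix' x hx, hfix' x hx]
  set σ : Equiv.Perm α := hinv.toPerm with hσ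
  have hσ2 : σ * σ = 1 := by
    ext x
    simp [hσ, hinv x]
  have hσsupp : σ.support ⊆ c.support := by
    intro x hx
    by_contra hxc
    exact (Equiv.Perm.mem_support.mp hx) (hfix' x hxc)
  have hconj : σ * c * σ = c⁻¹ := by
    ext x
    by_cases hx : x ∈ c.support
    · obtain ⟨i, hi⟩ := hc.exists_zpow_eq (Equiv.Perm.mem_support.mp ha)
        (Equiv.Perm.mem_support.mp hx)
      have h1 : σ x = (c ^ (-i)) a := by
        show f x = _; rw [← hi, hrev i]
      have h2 : c ((c ^ (-i)) a) = (c ^ (1 - i)) a := by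
        rw [← Equiv.Perm.mul_apply, show c * c ^ (-i) = c ^ (1 - i) by
          rw [← zpow_one_add]; ring_nf]
      have h3 : σ ((c ^ (1 - i)) a) = (c ^ (i - 1)) a := by
        show f _ = _; rw [hrev (1 - i)]; ring_nf
      have h4 : c⁻¹ x = (c ^ (i - 1)) a := by
        rw [← hi, ← zpow_neg_one, ← Equiv.Perm.mul_apply, ← zpow_add]; ring_nf
      simp only [Equiv.Perm.mul_apply, h1, h2, h3, h4]
    · have h0 : σ x = x := hfix' x hx
      have h1 : c x = x := Equiv.Perm.notMem_support.mp hx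
      have h2 : c⁻¹ x = x := (Equiv.Perm.inv_eq_iff_eq).mpr h1.symm
      simp only [Equiv.Perm.mul_apply, h0, h1, h2]
  refine ⟨σ, σ * c, hσ2, ?_, ?_, hσsupp, ?_⟩
  · have : σ * c * (σ * c) = (σ * c * σ) * c := by group
    rw [this, hconj, inv_mul_cancel]
  · rw [← mul_assoc, hσ2, one_mul]
  · refine subset_trans (Equiv.Perm.support_mul_le σ c) ?_
    exact sup_le hσsupp (le_refl _)

/-- Strengthened statement with support control. -/
lemma perm_decomp (π : Equiv.Perm α) :
    ∃ σ τ : Equiv.Perm α, σ * σ = 1 ∧ τ * τ = 1 ∧ π = σ * τ ∧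
      σ.support ⊆ π.support ∧ τ.support ⊆ π.support := by
  induction π using Equiv.Perm.cycle_induction_on with
  | base_one => exact ⟨1, 1, by simp, by simp, by simp, by simp, by simp⟩
  | base_cycles c hc => exact cycle_decomp hc
  | induction_disjoint π π' hd hc ih ih' =>
    obtain ⟨σ₁, τ₁, hσ₁, hτ₁, he₁, hs₁, ht₁⟩ := ih
    obtain ⟨σ₂, τ₂, hσ₂, hτ₂, he₂, hs₂, ht₂⟩ := ih'
    have hdsupp := Equiv.Perm.disjoint_iff_disjoint_support.mp hd
    have dis : ∀ (x y : Equiv.Perm α), x.support ⊆ π.support → y.support ⊆ π'.support →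
        Commute x y := by
      intro x y hx hy
      exact (Equiv.Perm.disjoint_iff_disjoint_support.mpr
        (Finset.disjoint_of_subset_left hx (Finset.disjoint_of_subset_right hy hdsupp))).commute
    have c12 : Commute σ₁ σ₂ := dis _ _ hs₁ hs₂
    have ct : Commute τ₁ σ₂ := dis _ _ ht₁ hs₂
    have ctt : Commute τ₁ τ₂ := dis _ _ ht₁ ht₂
    refine ⟨σ₁ * σ₂, τ₁ * τ₂, ?_, ?_, ?_, ?_, ?_⟩
    · calc σ₁ * σ₂ * (σ₁ * σ₂) = σ₁ * σ₁ * (σ₂ * σ₂) := by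
            rw [mul_assoc, mul_assoc, ← mul_assoc σ₂, c12.eq.symm, mul_assoc]
      _ = 1 := by rw [hσ₁, hσ₂, one_mul]
    · calc τ₁ * τ₂ * (τ₁ * τ₂) = τ₁ * τ₁ * (τ₂ * τ₂) := by
            rw [mul_assoc, mul_assoc, ← mul_assoc τ₂, ctt.eq.symm, mul_assoc]
      _ = 1 := by rw [hτ₁, hτ₂, one_mul]
    · rw [he₁, he₂]
      calc σ₁ * τ₁ * (σ₂ * τ₂) = σ₁ * (τ₁ * σ₂) * τ₂ := by group
        _ = σ₁ * (σ₂ * τ₁) * τ₂ := by rw [ct.eq]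
        _ = σ₁ * σ₂ * (τ₁ * τ₂) := by group
    · refine subset_trans (Equiv.Perm.support_mul_le _ _) ?_
      rw [hd.support_mul]
      exact sup_le (subset_trans hs₁ Finset.subset_union_left)
        (subset_trans hs₂ Finset.subset_union_right)
    · refine subset_trans (Equiv.Perm.support_mul_le _ _) ?_
      rw [hd.support_mul]
      exact sup_le (subset_trans ht₁ Finset.subset_union_left)
        (subset_trans ht₂ Finset.subset_union_right)

end Aux

/-- Every permutation on `n` elements is a product of two involutions, i.e. of two
permutations each of which is a product of pairwise disjoint transpositions. -/
theorem perm_eq_prod_two_involutions {n : ℕ} (π : Equiv.Perm (Fin n)) :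
    ∃ σ τ : Equiv.Perm (Fin n), σ * σ = 1 ∧ τ * τ = 1 ∧ π = σ * τ := by
  obtain ⟨σ, τ, h1, h2, h3, -, -⟩ := perm_decomp π
  exact ⟨σ, τ, h1, h2, h3⟩
end

section
/- Let {C_1, ..., C_s} be pairwise disjoint 2-cycle matrices, P a permutation matrix, C̃_i := (C_i − I_n)P, and define the s×s matrix Q̃ by Q̃_{ij} = c(C̃_i, C̃_j) for i ≠ j and Q̃_{ii} = c(C̃_i) + c(C̃_i, P) + c(P, C̃_i). Then for every α ∈ {0,1}^s, c(g(P,α)) = c(P) + αᵀQ̃α; hence minimizing c(g(P,α)) over binary α is equivalent to minimizing the QUBO αᵀQ̃α. -/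
open Matrix

def cost {n : ℕ} (F D A B : Matrix (Fin n) (Fin n) ℝ) : ℝ :=
  Matrix.trace (F * A * D * Bᵀ)


section Aux
variable {n : ℕ} (F D : Matrix (Fin n) (Fin n) ℝ)

lemma cost_add_left (A B E : Matrix (Fin n) (Fin n) ℝ) :
    cost F D (A + B) E = cost F D A E + cost F D B E := by
  simp [cost, Matrix.mul_add, Matrix.add_mul]

lemma cost_add_right (A B E : Matrix (Fin n) (Fin n) ℝ) :
    cost F D E (A + B) = cost F D E A + cost F D E B := by
  simp [cost, Matrix.transpose_add, Matrix.mul_add]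

lemma cost_smul_left (r : ℝ) (A E : Matrix (Fin n) (Fin n) ℝ) :
    cost F D (r • A) E = r * cost F D A E := by
  simp [cost, Matrix.mul_smul, Matrix.smul_mul]

lemma cost_smul_right (r : ℝ) (A E : Matrix (Fin n) (Fin n) ℝ) :
    cost F D E (r • A) = r * cost F D E A := by
  simp [cost, Matrix.transpose_smul, Matrix.mul_smul]

lemma cost_sum_left {ι : Type*} (t : Finset ι) (f : ι → Matrix (Fin n) (Fin n) ℝ)
    (E : Matrix (Fin n) (Fin n) ℝ) :
    cost F D (∑ i ∈ t, f i) E = ∑ i ∈ t, cost F D (f i) E := by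
  simp [cost, Matrix.mul_sum, Matrix.sum_mul, Matrix.trace_sum]

lemma cost_sum_right {ι : Type*} (t : Finset ι) (f : ι → Matrix (Fin n) (Fin n) ℝ)
    (E : Matrix (Fin n) (Fin n) ℝ) :
    cost F D E (∑ i ∈ t, f i) = ∑ i ∈ t, cost F D E (f i) := by
  simp [cost, Matrix.transpose_sum, Matrix.mul_sum, Matrix.trace_sum]

end Aux

/-- The QUBO form of the cyclic expansion: with `C̃ i = (C i - I) P`,
`g(P,α) = P + ∑ i, α i • C̃ i` and `Q̃` as defined, `c(g(P,α)) = c(P) + αᵀ Q̃ α`;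
hence minimizing `c(g(P,α))` over binary `α` is equivalent to minimizing `αᵀ Q̃ α`. -/
theorem cost_qubo_form {n s : ℕ} (F D : Matrix (Fin n) (Fin n) ℝ)
    (C : Fin s → Matrix (Fin n) (Fin n) ℝ)
    (hC : ∀ i, IsTwoCycleMatrix (C i))
    (hdisj : ∀ i j, i ≠ j → DisjointTwoCycles (C i) (C j))
    (P : Matrix (Fin n) (Fin n) ℝ) (hP : IsPermMatrix P)
    (Ct : Fin s → Matrix (Fin n) (Fin n) ℝ) (hCt : ∀ i, Ct i = (C i - 1) * P)
    (Q : Matrix (Fin s) (Fin s) ℝ)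
    (hQ : ∀ i j, Q i j = if i = j then
        cost F D (Ct i) (Ct i) + cost F D (Ct i) P + cost F D P (Ct i)
      else cost F D (Ct i) (Ct j))
    (g : (Fin s → ℝ) → Matrix (Fin n) (Fin n) ℝ)
    (hg : ∀ β, g β = P + ∑ i, β i • Ct i) :
    (∀ α : Fin s → ℝ, (∀ i, α i = 0 ∨ α i = 1) →
        cost F D (g α) (g α) = cost F D P P + α ⬝ᵥ Q.mulVec α) ∧
    (∀ α α' : Fin s → ℝ, (∀ i, α i = 0 ∨ α i = 1) → (∀ i, α' i = 0 ∨ α' i = 1) →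
        (cost F D (g α) (g α) ≤ cost F D (g α') (g α') ↔
          α ⬝ᵥ Q.mulVec α ≤ α' ⬝ᵥ Q.mulVec α')) := by
  have key : ∀ α : Fin s → ℝ, (∀ i, α i = 0 ∨ α i = 1) →
      cost F D (g α) (g α) = cost F D P P + α ⬝ᵥ Q.mulVec α := by
    intro α hα
    have hsq : ∀ i, α i * α i = α i := fun i => by rcases hα i with h | h <;> simp [h]
    set S : Matrix (Fin n) (Fin n) ℝ := ∑ i, α i • Ct i with hS
    have expand : cost F D (g α) (g α)
        = cost F D P P + cost F D P S + cost F D S P + cost F D S S := by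
      rw [hg, cost_add_left, cost_add_right, cost_add_right]; ring
    have h1 : cost F D P S = ∑ i, α i * cost F D P (Ct i) := by
      rw [hS, cost_sum_right]; simp [cost_smul_right]
    have h2 : cost F D S P = ∑ i, α i * cost F D (Ct i) P := by
      rw [hS, cost_sum_left]; simp [cost_smul_left]
    have h3 : cost F D S S = ∑ i, ∑ j, α i * (α j * cost F D (Ct i) (Ct j)) := by
      rw [hS, cost_sum_left]
      refine Finset.sum_congr rfl fun i _ => ?_
      rw [cost_smul_left, cost_sum_right, Finset.mul_sum]
      exact Finset.sum_congr rfl fun j _ => by rw [cost_smul_right]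
    have hQα : α ⬝ᵥ Q.mulVec α
        = ∑ i, (α i * cost F D (Ct i) P + α i * cost F D P (Ct i)
            + ∑ j, α i * (α j * cost F D (Ct i) (Ct j))) := by
      simp only [dotProduct, Matrix.mulVec, Finset.mul_sum]
      refine Finset.sum_congr rfl fun i _ => ?_
      have : ∀ j, α i * (Q i j * α j)
          = (if j = i then α i * cost F D (Ct i) P + α i * cost F D P (Ct i) else 0)
            + α i * (α j * cost F D (Ct i) (Ct j)) := by
        intro j
        rw [hQ]
        by_cases h : j = i
        · subst h; rw [if_pos rfl, if_pos rfl]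
          linear_combination (cost F D (Ct j) P + cost F D P (Ct j)) * hsq j
        · rw [if_neg (fun hh => h hh.symm), if_neg h]; ring
      rw [Finset.sum_congr rfl fun j _ => this j, Finset.sum_add_distrib]
      simp
    rw [expand, h1, h2, h3, hQα, Finset.sum_add_distrib, Finset.sum_add_distrib]
    ring
  refine ⟨key, fun α α' h h' => ?_⟩
  rw [key α h, key α' h']
  constructor <;> intro <;> linarith
end
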